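/- Let S := {1/n : n ∈ ℕ, n ≥ 1} ⊆ ℝ. Then the uniform asymptotic upper density of S with respect to its counting measure and Lebesgue measure is infinite, D̄(#|_S;|·|) = +∞, and yet S − S ⊆ [−2,2] and S − S is not syndetic in ℝ. -/

import Mathlib

open MeasureTheory Set Pointwise Filter ENNReal

/-- The uniform asymptotic upper density of a measure `ν` with respect to `μ`:
`inf` over nonempty compact sets `C` of `sup` over Borel sets `V` with compact
closure of `ν V / μ (C + V)`, where `C + V` is a Minkowski sum. -/
noncomputable def uaud {G : Type*} [AddCommGroup G] [TopologicalSpace G] [MeasurableSpace G]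
    (ν μ : Measure G) : ℝ≥0∞ :=
  ⨅ C ∈ {C : Set G | IsCompact C ∧ C.Nonempty},
    ⨆ V ∈ {V : Set G | MeasurableSet V ∧ IsCompact (closure V)},
      ν V / μ (C + V)

/-- The counting measure of the set `S`: the sum of Dirac measures at the points of `S`,
so that `countOn S V = #(S ∩ V)` for measurable `V`. -/
noncomputable def countOn {G : Type*} [MeasurableSpace G] (S : Set G) : Measure G :=
  Measure.sum (fun s : S => Measure.dirac (s : G))

/-- `T` is syndetic if a compact set of translates of `T` covers `G`. -/
def IsSyndetic {G : Type*} [AddCommGroup G] [TopologicalSpace G] (T : Set G) : Prop :=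
  ∃ K : Set G, IsCompact K ∧ K + T = Set.univ

theorem infinite_density_not_syndetic :
    uaud (countOn {x : ℝ | ∃ n : ℕ, 1 ≤ n ∧ x = 1 / (n : ℝ)}) volume = ⊤ ∧
    {x : ℝ | ∃ n : ℕ, 1 ≤ n ∧ x = 1 / (n : ℝ)} - {x : ℝ | ∃ n : ℕ, 1 ≤ n ∧ x = 1 / (n : ℝ)}
      ⊆ Set.Icc (-2 : ℝ) 2 ∧
    ¬ IsSyndetic
      ({x : ℝ | ∃ n : ℕ, 1 ≤ n ∧ x = 1 / (n : ℝ)} -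
        {x : ℝ | ∃ n : ℕ, 1 ≤ n ∧ x = 1 / (n : ℝ)}) := by
  set S : Set ℝ := {x : ℝ | ∃ n : ℕ, 1 ≤ n ∧ x = 1 / (n : ℝ)} with hS
  -- basic facts
  have hmem : ∀ x ∈ S, 0 < x ∧ x ≤ 1 := by
    rintro x ⟨n, hn, rfl⟩
    have hn' : (1 : ℝ) ≤ (n : ℝ) := by exact_mod_cast hn
    constructor
    · positivity
    · rw [div_le_one (by linarith)]; linarith
  have hSsub : S ⊆ Set.Icc (0 : ℝ) 1 := fun x hx => ⟨(hmem x hx).1.le, (hmem x hx).2⟩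
  have hScount : S.Countable := by
    apply Set.Countable.mono _ (Set.countable_range (fun n : ℕ => 1 / (n : ℝ)))
    rintro x ⟨n, _, rfl⟩; exact ⟨n, rfl⟩
  have hSmeas : MeasurableSet S := hScount.measurableSet
  have hSinf : S.Infinite := by
    refine Set.infinite_of_injective_forall_mem (f := fun n : ℕ => 1 / ((n : ℝ) + 1)) ?_ ?_
    · intro a b hab
      simp only at hab
      have ha : (0:ℝ) < (a:ℝ) + 1 := by positivity
      have hb : (0:ℝ) < (b:ℝ) + 1 := by positivity
      field_simp at hab
      exact_mod_cast (add_right_cancel (mod_cast hab.symm : ((a:ℝ) + 1 = b + 1)))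
    · intro n
      exact ⟨n + 1, le_add_self, by push_cast; ring⟩
  have hSclos : IsCompact (closure S) :=
    isCompact_Icc.of_isClosed_subset isClosed_closure (closure_minimal hSsub isClosed_Icc)
  have hνS : countOn S S = ⊤ := by
    rw [countOn, Measure.sum_apply _ hSmeas]
    have : ∀ s : S, Measure.dirac (s : ℝ) S = 1 := fun s => by
      rw [Measure.dirac_apply' _ hSmeas]; simp [s.2]
    rw [tsum_congr this]
    haveI : Infinite S := hSinf.to_subtype
    exact ENNReal.tsum_const_eq_top_of_ne_zero one_ne_zero
  refine ⟨?_, ?_, ?_⟩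
  · -- density is ⊤
    rw [uaud, iInf_eq_top]
    intro C
    rw [iInf_eq_top]
    rintro ⟨hCcomp, hCne⟩
    rw [eq_top_iff]
    calc (⊤ : ℝ≥0∞) = countOn S S / volume (C + S) := by
          rw [hνS]
          refine (ENNReal.top_div_of_ne_top ?_).symm
          have hsub : C + S ⊆ C + closure S := Set.add_subset_add_left subset_closure
          have hcomp : IsCompact (C + closure S) := hCcomp.add hSclos
          exact ((measure_mono hsub).trans_lt hcomp.measure_lt_top).ne
      _ ≤ _ := le_iSup₂ (f := fun V _ => countOn S V / volume (C + V)) S ⟨hSmeas, hSclos⟩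
  · -- S - S ⊆ [-2,2]
    rintro z ⟨x, hx, y, hy, rfl⟩
    obtain ⟨hx0, hx1⟩ := hmem x hx
    obtain ⟨hy0, hy1⟩ := hmem y hy
    constructor <;> simp only <;> linarith
  · -- not syndetic
    rintro ⟨K, hK, hKT⟩
    obtain ⟨r, hr⟩ := hK.isBounded.subset_closedBall 0
    have : (r + 3 : ℝ) ∈ K + (S - S) := hKT ▸ Set.mem_univ _
    obtain ⟨k, hk, d, hd, hkd⟩ := this
    have hk' : |k| ≤ r := by
      have := hr hk; rwa [Metric.mem_closedBall, Real.dist_eq, sub_zero] at this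
    obtain ⟨x, hx, y, hy, rfl⟩ := hd
    obtain ⟨hx0, hx1⟩ := hmem x hx
    obtain ⟨hy0, hy1⟩ := hmem y hy
    have : k ≤ r := (abs_le.mp hk').2
    simp only at hkd
    linarith [hkd]
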